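/- The maximum flow (capacity) for May's diagram equals Q(ρ_c) = ρ_c · v_f · exp(−1/a), and Q is strictly increasing on (0, ρ_c] and strictly decreasing on [ρ_c, ∞). -/

import Mathlib

theorem mays_capacity (v_f ρ_c a : ℝ) (hv : 0 < v_f) (hρc : 0 < ρ_c) (ha : 0 < a)
    (V Q : ℝ → ℝ)
    (hV : ∀ ρ, V ρ = v_f * Real.exp (-(1/a) * (ρ/ρ_c) ^ a))
    (hQ : ∀ ρ, Q ρ = ρ * V ρ) :
    Q ρ_c = ρ_c * v_f * Real.exp (-1/a) ∧
      StrictMonoOn Q (Set.Ioc 0 ρ_c) ∧ StrictAntiOn Q (Set.Ici ρ_c) := by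
  have hQfun : ∀ ρ, Q ρ = ρ * (v_f * Real.exp (-(1/a) * (ρ/ρ_c) ^ a)) := by
    intro ρ; rw [hQ, hV]
  -- derivative of Q at positive points
  have hderiv : ∀ ρ : ℝ, 0 < ρ →
      HasDerivAt Q (v_f * Real.exp (-(1/a) * (ρ/ρ_c) ^ a) * (1 - (ρ/ρ_c) ^ a)) ρ := by
    intro ρ hρ
    have hx : (0:ℝ) < ρ / ρ_c := div_pos hρ hρc
    have h1 : HasDerivAt (fun x : ℝ => x / ρ_c) (1 / ρ_c) ρ := by
      simpa using (hasDerivAt_id ρ).div_const ρ_c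
    have h2 : HasDerivAt (fun x : ℝ => (x / ρ_c) ^ a)
        (a * (ρ / ρ_c) ^ (a - 1) * (1 / ρ_c)) ρ := by
      simpa [mul_comm, mul_assoc, mul_left_comm] using
        h1.rpow_const (Or.inl hx.ne')
    have h3 : HasDerivAt (fun x : ℝ => -(1/a) * (x / ρ_c) ^ a)
        (-(1/a) * (a * (ρ / ρ_c) ^ (a - 1) * (1 / ρ_c))) ρ := h2.const_mul _
    have h4 := (h3.exp).const_mul v_f
    have h5 := (hasDerivAt_id ρ).mul h4
    have h6 : HasDerivAt Q
        (1 * (v_f * Real.exp (-(1/a) * (ρ/ρ_c) ^ a)) +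
          ρ * (v_f * (Real.exp (-(1/a) * (ρ/ρ_c) ^ a) *
          (-(1/a) * (a * (ρ / ρ_c) ^ (a - 1) * (1 / ρ_c)))))) ρ := by
      refine HasDerivAt.congr_of_eventuallyEq ?_ (Filter.Eventually.of_forall hQfun)
      simpa [id, Pi.mul_def] using h5
    convert h6 using 1
    have hrw : ρ * (ρ / ρ_c) ^ (a - 1) * (1 / ρ_c) = (ρ / ρ_c) ^ a := by
      have h : (ρ / ρ_c) ^ a = (ρ / ρ_c) ^ (a - 1) * (ρ / ρ_c) := by
        rw [← Real.rpow_add_one hx.ne']; ring_nf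
      rw [h]; field_simp
    have h7 : ρ * (v_f * (Real.exp (-(1/a) * (ρ/ρ_c) ^ a) *
        (-(1/a) * (a * (ρ / ρ_c) ^ (a - 1) * (1 / ρ_c))))) =
        -(v_f * Real.exp (-(1/a) * (ρ/ρ_c) ^ a) * (ρ * (ρ / ρ_c) ^ (a - 1) * (1 / ρ_c))) := by
      field_simp
    rw [h7, hrw]
    ring
  have hcont : ∀ ρ : ℝ, 0 < ρ → ContinuousAt Q ρ := fun ρ hρ =>
    (hderiv ρ hρ).continuousAt
  refine ⟨?_, ?_, ?_⟩
  · rw [hQfun]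
    rw [div_self hρc.ne', Real.one_rpow]
    ring_nf
  · apply strictMonoOn_of_hasDerivWithinAt_pos (convex_Ioc 0 ρ_c)
      (fun x hx => (hcont x hx.1).continuousWithinAt)
    · intro x hx
      rw [interior_Ioc] at hx
      exact (hderiv x hx.1).hasDerivWithinAt
    · intro x hx
      rw [interior_Ioc] at hx
      have hx1 : (x / ρ_c) ^ a < 1 := by
        apply Real.rpow_lt_one (le_of_lt (div_pos hx.1 hρc)) _ ha
        exact (div_lt_one hρc).mpr hx.2
      have hexp : 0 < Real.exp (-(1/a) * (x/ρ_c) ^ a) := Real.exp_pos _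
      have := mul_pos hv hexp
      nlinarith
  · apply strictAntiOn_of_hasDerivWithinAt_neg (convex_Ici ρ_c)
      (fun x hx => (hcont x (lt_of_lt_of_le hρc hx)).continuousWithinAt)
    · intro x hx
      rw [interior_Ici] at hx
      exact (hderiv x (hρc.trans hx)).hasDerivWithinAt
    · intro x hx
      rw [interior_Ici] at hx
      have hx1 : 1 < (x / ρ_c) ^ a :=
        Real.one_lt_rpow_iff_of_pos (div_pos (hρc.trans hx) hρc) |>.mpr
          (Or.inl ⟨(one_lt_div hρc).mpr hx, ha⟩)
      have hexp : 0 < Real.exp (-(1/a) * (x/ρ_c) ^ a) := Real.exp_pos _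
      nlinarith [mul_pos (mul_pos hv hexp) (sub_pos.mpr hx1)]
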